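/- Let 1 < p < ∞, let ω ∈ D̂ be a radial weight, and ν, η radial weights such that the maximal Bergman projection P⁺_ω(f)(z) = ∫_𝔻 f(ζ)|B^ω_z(ζ)|ω(ζ) dA(ζ) is bounded from L^p_ν to L^p_η. If ν vanishes on a set E ⊂ 𝔻 of positive measure, then ω vanishes almost everywhere on E. -/

import Mathlib

open MeasureTheory Set Complex
open scoped ENNReal NNReal

/-- `what ω r = ∫_r^1 ω(s) ds`. -/
noncomputable def what (ω : ℝ → ℝ) (r : ℝ) : ℝ := ∫ s in r..(1:ℝ), ω s

/-- Moment `mom ω x = ∫_0^1 s^x ω(s) ds`. -/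
noncomputable def mom (ω : ℝ → ℝ) (x : ℝ) : ℝ := ∫ s in (0:ℝ)..1, s ^ x * ω s

/-- The Bergman kernel `B^ω_z(ζ) = Σ (ζ z̄)^n / (2 ω_{2n+1})`. -/
noncomputable def Bker (ω : ℝ → ℝ) (z ζ : ℂ) : ℂ :=
  ∑' n : ℕ, (ζ * (starRingEnd ℂ) z) ^ n / ((2 * mom ω (2 * n + 1) : ℝ) : ℂ)

/-- Normalized area measure `dA = dx dy / π` on `ℂ`. -/
noncomputable def dA : Measure ℂ := (ENNReal.ofReal Real.pi)⁻¹ • (volume : Measure ℂ)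


lemma what_eq_Ioo (ω : ℝ → ℝ) {r : ℝ} (hr : r ≤ 1) : what ω r = ∫ s in Ioo r 1, ω s := by
  rw [what, intervalIntegral.integral_of_le hr]
  exact (setIntegral_congr_set Ioo_ae_eq_Ioc).symm

lemma mom_eq_Ioo (ω : ℝ → ℝ) (x : ℝ) : mom ω x = ∫ s in Ioo (0:ℝ) 1, s ^ x * ω s := by
  rw [mom, intervalIntegral.integral_of_le one_pos.le]
  exact (setIntegral_congr_set Ioo_ae_eq_Ioc).symm

lemma mom_ge (ω : ℝ → ℝ) (hωint : IntegrableOn ω (Set.Ico (0:ℝ) 1))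
    (hωnn : ∀ r ∈ Set.Ico (0:ℝ) 1, 0 ≤ ω r)
    {ρ x : ℝ} (hρ0 : 0 ≤ ρ) (hρ1 : ρ < 1) (hx : 0 < x) :
    ρ ^ x * what ω ρ ≤ mom ω x := by
  have hcont : Continuous fun s : ℝ => s ^ x := by
    rw [continuous_iff_continuousAt]
    exact fun s => Real.continuousAt_rpow_const s x (Or.inr hx.le)
  have hIoo : IntegrableOn ω (Ioo (0:ℝ) 1) := hωint.mono_set Ioo_subset_Ico_self
  have hIg : IntegrableOn (fun s : ℝ => s ^ x * ω s) (Ioo (0:ℝ) 1) := by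
    refine Integrable.mono' hIoo.abs (hcont.aestronglyMeasurable.mul hIoo.aestronglyMeasurable) ?_
    refine (ae_restrict_mem measurableSet_Ioo).mono fun s hs => ?_
    rw [Real.norm_eq_abs, abs_mul]
    have h1 : |s ^ x| ≤ 1 := by
      rw [_root_.abs_of_nonneg (Real.rpow_nonneg hs.1.le x)]
      exact Real.rpow_le_one hs.1.le hs.2.le hx.le
    calc |s ^ x| * |ω s| ≤ 1 * |ω s| := by
          exact mul_le_mul_of_nonneg_right h1 (abs_nonneg _)
      _ = |ω s| := one_mul _
  have hnn : ∀ s ∈ Ioo (0:ℝ) 1, 0 ≤ s ^ x * ω s := fun s hs =>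
    mul_nonneg (Real.rpow_nonneg hs.1.le x) (hωnn s ⟨hs.1.le, hs.2⟩)
  have hsub : Ioo ρ 1 ⊆ Ioo (0:ℝ) 1 := fun s hs => ⟨lt_of_le_of_lt hρ0 hs.1, hs.2⟩
  rw [mom_eq_Ioo, what_eq_Ioo ω hρ1.le]
  calc ρ ^ x * ∫ s in Ioo ρ 1, ω s = ∫ s in Ioo ρ 1, ρ ^ x * ω s := by
        rw [integral_const_mul]
    _ ≤ ∫ s in Ioo ρ 1, s ^ x * ω s := by
        refine setIntegral_mono_on ((hIoo.mono_set hsub).const_mul _) (hIg.mono_set hsub)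
          measurableSet_Ioo fun s hs => ?_
        exact mul_le_mul_of_nonneg_right
          (Real.rpow_le_rpow hρ0 hs.1.le hx.le) (hωnn s ⟨(hρ0.trans hs.1.le), hs.2⟩)
    _ ≤ ∫ s in Ioo (0:ℝ) 1, s ^ x * ω s := by
        refine setIntegral_mono_set hIg ?_ (HasSubset.Subset.eventuallyLE hsub)
        exact (ae_restrict_mem measurableSet_Ioo).mono fun s hs => hnn s hs

lemma mom_pos (ω : ℝ → ℝ) (hωint : IntegrableOn ω (Set.Ico (0:ℝ) 1))
    (hωnn : ∀ r ∈ Set.Ico (0:ℝ) 1, 0 ≤ ω r)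
    (hhalf : 0 < what ω (1/2)) {x : ℝ} (hx : 0 < x) : 0 < mom ω x := by
  have := mom_ge ω hωint hωnn (by norm_num : (0:ℝ) ≤ 1/2) (by norm_num) hx
  have h2 : (0:ℝ) < (1/2 : ℝ) ^ x := Real.rpow_pos_of_pos (by norm_num) x
  nlinarith

/-- coefficients of the Bergman kernel -/
noncomputable def bc (ω : ℝ → ℝ) : ℕ → ℂ :=
  fun n => (((2 * mom ω (2 * (n:ℝ) + 1) : ℝ)) : ℂ)⁻¹

/-- the kernel power series -/
noncomputable def bps (ω : ℝ → ℝ) : FormalMultilinearSeries ℂ ℂ ℂ :=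
  FormalMultilinearSeries.ofScalars ℂ (bc ω)

lemma Bker_eq_sum (ω : ℝ → ℝ) (z ζ : ℂ) : Bker ω z ζ = (bps ω).sum (ζ * (starRingEnd ℂ) z) := by
  rw [Bker, FormalMultilinearSeries.sum]
  refine tsum_congr fun n => ?_
  rw [bps, FormalMultilinearSeries.ofScalars_apply_eq, bc, smul_eq_mul, div_eq_mul_inv]
  ring

lemma norm_bc (ω : ℝ → ℝ) (hm : ∀ n : ℕ, 0 < mom ω (2 * (n:ℝ) + 1)) (n : ℕ) :
    ‖bc ω n‖ = (2 * mom ω (2 * (n:ℝ) + 1))⁻¹ := by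
  rw [bc, norm_inv, Complex.norm_real, Real.norm_eq_abs,
    _root_.abs_of_pos (by have := hm n; positivity : (0:ℝ) < 2 * mom ω (2 * (n:ℝ) + 1))]

lemma one_le_radius (ω : ℝ → ℝ) (hωint : IntegrableOn ω (Set.Ico (0:ℝ) 1))
    (hωnn : ∀ r ∈ Set.Ico (0:ℝ) 1, 0 ≤ ω r)
    (hωpos : ∀ r ∈ Set.Ico (0:ℝ) 1, 0 < what ω r) :
    1 ≤ (bps ω).radius := by
  have hm : ∀ n : ℕ, 0 < mom ω (2 * (n:ℝ) + 1) := fun n =>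
    mom_pos ω hωint hωnn (hωpos (1/2) (by norm_num)) (by positivity)
  refine ENNReal.le_of_forall_nnreal_lt fun r hr => ?_
  rcases eq_or_ne r 0 with rfl | hr0
  · exact zero_le
  have hr1 : (r : ℝ) < 1 := by exact_mod_cast hr
  have hrpos : (0:ℝ) < r := by positivity
  set ρ : ℝ := Real.sqrt r with hρ
  have hρpos : 0 < ρ := Real.sqrt_pos.mpr hrpos
  have hρ1 : ρ < 1 := by
    rw [hρ, show (1:ℝ) = Real.sqrt 1 by simp]
    exact Real.sqrt_lt_sqrt hrpos.le hr1
  have hρsq : ρ * ρ = (r : ℝ) := Real.mul_self_sqrt hrpos.le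
  have hwρ : 0 < what ω ρ := hωpos ρ ⟨hρpos.le, hρ1⟩
  refine (bps ω).le_radius_of_bound ((2 * ρ * what ω ρ)⁻¹) fun n => ?_
  rw [bps, FormalMultilinearSeries.ofScalars_norm, norm_bc ω hm]
  have hmom : ρ ^ (2*(n:ℝ)+1) * what ω ρ ≤ mom ω (2 * (n:ℝ) + 1) :=
    mom_ge ω hωint hωnn hρpos.le hρ1 (by positivity)
  have hρpow : ρ ^ (2*(n:ℝ)+1) = ρ ^ (2*n+1 : ℕ) := by
    rw [← Real.rpow_natCast ρ (2*n+1)]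
    norm_num
  have key : (2 * mom ω (2 * (n:ℝ) + 1))⁻¹ ≤ (2 * (ρ ^ (2*n+1:ℕ) * what ω ρ))⁻¹ := by
    apply inv_anti₀
    · positivity
    · nlinarith [hmom, hρpow]
  calc (2 * mom ω (2 * (n:ℝ) + 1))⁻¹ * (r:ℝ) ^ n
      ≤ (2 * (ρ ^ (2*n+1:ℕ) * what ω ρ))⁻¹ * (r:ℝ) ^ n := by
        exact mul_le_mul_of_nonneg_right key (by positivity)
    _ = (2 * ρ * what ω ρ)⁻¹ := by
        have : (r:ℝ) ^ n = (ρ^2) ^ n := by rw [sq, hρsq]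
        rw [this]
        field_simp
        ring

lemma bps_sum_zero (ω : ℝ → ℝ) : (bps ω).sum 0 = bc ω 0 := by
  rw [FormalMultilinearSeries.sum]
  have : ∀ n : ℕ, (bps ω n) (fun _ => (0:ℂ)) = if n = 0 then bc ω 0 else 0 := by
    intro n
    rw [bps, FormalMultilinearSeries.ofScalars_apply_eq]
    rcases eq_or_ne n 0 with rfl | hn
    · simp
    · simp [zero_pow hn, hn]
  rw [tsum_congr this, tsum_ite_eq]

lemma bc_zero_ne (ω : ℝ → ℝ) (hm : 0 < mom ω 1) : bc ω 0 ≠ 0 := by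
  rw [bc]
  have : (2 * mom ω (2 * ((0:ℕ):ℝ) + 1)) = 2 * mom ω 1 := by norm_num
  rw [this]
  simp only [ne_eq, inv_eq_zero]
  exact_mod_cast (by positivity : (0:ℝ) < 2 * mom ω 1).ne'

section analytic

variable (ω : ℝ → ℝ)

lemma bps_analyticAt (hrad : 1 ≤ (bps ω).radius) {x : ℂ} (hx : ‖x‖ < 1) : AnalyticAt ℂ (bps ω).sum x := by
  have hpos : 0 < (bps ω).radius := lt_of_lt_of_le one_pos hrad
  refine ((bps ω).hasFPowerSeriesOnBall hpos).analyticAt_of_mem ?_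
  rw [EMetric.mem_ball, edist_zero_right]
  refine lt_of_lt_of_le ?_ hrad
  rw [show (1:ℝ≥0∞) = ((1:ℝ≥0):ℝ≥0∞) by norm_num, enorm_eq_nnnorm, ENNReal.coe_lt_coe]
  exact_mod_cast hx

lemma bps_continuousOn_ball (hrad : 1 ≤ (bps ω).radius) :
    ContinuousOn (fun q : ℂ × ℂ => (bps ω).sum (q.2 * (starRingEnd ℂ) q.1))
      (Metric.ball (0:ℂ) 1 ×ˢ Metric.ball (0:ℂ) 1) := by
  have hpos : 0 < (bps ω).radius := lt_of_lt_of_le one_pos hrad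
  have hc := ((bps ω).hasFPowerSeriesOnBall hpos).continuousOn
  refine hc.comp (Continuous.continuousOn (by continuity)) fun q hq => ?_
  rw [mem_prod, Metric.mem_ball, Metric.mem_ball, dist_zero_right, dist_zero_right] at hq
  show q.2 * (starRingEnd ℂ) q.1 ∈ Metric.eball 0 (bps ω).radius
  rw [EMetric.mem_ball, edist_zero_right]
  refine lt_of_lt_of_le ?_ hrad
  have h1 : ‖q.2 * (starRingEnd ℂ) q.1‖ < 1 := by
    rw [norm_mul, RCLike.norm_conj]
    nlinarith [norm_nonneg q.1, norm_nonneg q.2, hq.1, hq.2]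
  rw [show (1:ℝ≥0∞) = ((1:ℝ≥0):ℝ≥0∞) by norm_num, enorm_eq_nnnorm, ENNReal.coe_lt_coe]
  exact_mod_cast h1

lemma countable_zeros (hrad : 1 ≤ (bps ω).radius) (hne : bc ω 0 ≠ 0) {z₀ : ℂ} (hz₀ : ‖z₀‖ < 1) :
    {ζ : ℂ | ζ ∈ Metric.ball (0:ℂ) 1 ∧ (bps ω).sum (ζ * (starRingEnd ℂ) z₀) = 0}.Countable := by
  set h : ℂ → ℂ := fun ζ => (bps ω).sum (ζ * (starRingEnd ℂ) z₀) with hh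
  have hA : AnalyticOnNhd ℂ h (Metric.ball (0:ℂ) 1) := by
    intro ζ hζ
    rw [Metric.mem_ball, dist_zero_right] at hζ
    have h1 : ‖ζ * (starRingEnd ℂ) z₀‖ < 1 := by
      rw [norm_mul, RCLike.norm_conj]
      nlinarith [norm_nonneg ζ, norm_nonneg z₀]
    have := AnalyticAt.comp (g := (bps ω).sum) (f := fun ζ : ℂ => ζ * (starRingEnd ℂ) z₀)
      (x := ζ) (bps_analyticAt ω hrad h1) ((analyticAt_id).mul analyticAt_const)
    exact this
  have h0 : h 0 ≠ 0 := by
    rw [hh]; simp only [zero_mul, bps_sum_zero]; exact hne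
  set Z := {ζ : ℂ | ζ ∈ Metric.ball (0:ℂ) 1 ∧ h ζ = 0} with hZ
  have hdisc : DiscreteTopology ↥Z := by
    rw [discreteTopology_subtype_iff]
    intro x hx
    rcases (hA x hx.1).eventually_eq_zero_or_eventually_ne_zero with hev | hev
    · exfalso
      have := hA.eqOn_zero_of_preconnected_of_eventuallyEq_zero
        (convex_ball (0:ℂ) 1).isPreconnected hx.1 hev
      exact h0 (this (Metric.mem_ball_self one_pos))
    · rw [← Filter.empty_mem_iff_bot]
      have h1 : {ζ : ℂ | h ζ ≠ 0} ∈ nhdsWithin x {x}ᶜ ⊓ Filter.principal Z :=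
        Filter.mem_inf_of_left hev
      have h2 : Z ∈ nhdsWithin x {x}ᶜ ⊓ Filter.principal Z :=
        Filter.mem_inf_of_right (Filter.mem_principal_self Z)
      have : {ζ : ℂ | h ζ ≠ 0} ∩ Z = ∅ := by
        ext ζ; simp only [mem_inter_iff, mem_setOf_eq, mem_empty_iff_false, iff_false, not_and]
        intro hζ hζZ; exact hζ hζZ.2
      rw [← this]
      exact Filter.inter_mem h1 h2
  exact (HereditarilyLindelof_LindelofSets Z).countable hdisc

end analytic

section radial
open Real

noncomputable def pcB (p : ℝ × ℝ) : ℝ × ℝ →L[ℝ] ℝ × ℝ :=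
  LinearMap.toContinuousLinearMap (Matrix.toLin (Module.Basis.finTwoProd ℝ) (Module.Basis.finTwoProd ℝ)
    !![Real.cos p.2, -p.1 * Real.sin p.2; Real.sin p.2, p.1 * Real.cos p.2])

lemma pcB_det (p : ℝ × ℝ) : (pcB p).det = p.1 := by
  conv_rhs => rw [← one_mul p.1, ← Real.cos_sq_add_sin_sq p.2]
  simp only [pcB, neg_mul, LinearMap.det_toContinuousLinearMap, LinearMap.det_toLin,
    Matrix.det_fin_two_of, sub_neg_eq_add]
  ring

lemma abs_eq_nrm (z : ℂ) : ‖z‖ = Real.sqrt (z.re^2 + z.im^2) := by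
  rw [Complex.norm_def, Complex.normSq_apply]; ring_nf

lemma radial_null {N : Set ℝ} (hN : volume N = 0) :
    volume {z : ℂ | ‖z‖ ∈ N} = 0 := by
  obtain ⟨N', hNsub, hN'm, hN'0⟩ := exists_measurable_superset_of_null hN
  have hnrm : Continuous fun q : ℝ × ℝ => Real.sqrt (q.1^2 + q.2^2) := by continuity
  set A : Set (ℝ × ℝ) := (fun q : ℝ × ℝ => Real.sqrt (q.1^2 + q.2^2)) ⁻¹' N' with hA
  have hAm : MeasurableSet A := hnrm.measurable hN'm
  set s : Set (ℝ × ℝ) := (N' ∩ Ioi 0) ×ˢ Ioc (-π) π with hs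
  have hsm : MeasurableSet s := (hN'm.inter measurableSet_Ioi).prod measurableSet_Ioc
  have hs0 : volume s = 0 := by
    rw [hs, MeasureTheory.Measure.volume_eq_prod ℝ ℝ, Measure.prod_prod,
      measure_mono_null inter_subset_left hN'0, zero_mul]
  have himg : volume (polarCoord.symm '' s) = 0 := by
    refine le_antisymm (le_trans (addHaar_image_le_lintegral_abs_det_fderiv volume hsm
      (fun x _ => (hasFDerivAt_polarCoord_symm x).hasFDerivWithinAt)) ?_) zero_le
    rw [setLIntegral_measure_zero _ _ hs0]
  have hAsub : A ⊆ insert (0, 0) (polarCoord.symm '' s) := by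
    intro q hq
    rcases eq_or_ne q (0, 0) with rfl | hq0
    · exact mem_insert _ _
    right
    set z : ℂ := ⟨q.1, q.2⟩ with hz
    have hzre : z.re = q.1 := rfl
    have hzim : z.im = q.2 := rfl
    have hzq : ‖z‖ = Real.sqrt (q.1^2 + q.2^2) := by rw [abs_eq_nrm, hzre, hzim]
    have hz0 : z ≠ 0 := by
      intro h
      apply hq0
      have h1 : q.1 = 0 := by rw [← hzre, h]; rfl
      have h2 : q.2 = 0 := by rw [← hzim, h]; rfl
      exact Prod.ext h1 h2
    have habs : 0 < ‖z‖ := norm_pos_iff.mpr hz0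
    refine ⟨(‖z‖, Complex.arg z), ⟨⟨?_, habs⟩,
      ⟨Complex.neg_pi_lt_arg z, Complex.arg_le_pi z⟩⟩, ?_⟩
    · show ‖z‖ ∈ N'
      rw [hzq]; exact hq
    rw [polarCoord_symm_apply]
    have hcos := Complex.cos_arg hz0
    have hsin := Complex.sin_arg z
    refine Prod.ext ?_ ?_
    · show ‖z‖ * Real.cos z.arg = q.1
      rw [hcos]; field_simp; exact hzre
    · show ‖z‖ * Real.sin z.arg = q.2
      rw [hsin]; field_simp; exact hzim
  have hA0 : volume A = 0 := by
    refine measure_mono_null hAsub ?_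
    rw [Set.insert_eq]
    exact measure_union_null (measure_singleton _) himg
  have hpre : {z : ℂ | ‖z‖ ∈ N'} = Complex.measurableEquivRealProd ⁻¹' A := by
    ext z
    simp only [hA, mem_setOf_eq, mem_preimage, Complex.measurableEquivRealProd_apply]
    rw [abs_eq_nrm]
  have : volume {z : ℂ | ‖z‖ ∈ N'} = 0 := by
    rw [hpre, Complex.volume_preserving_equiv_real_prod.measure_preimage hAm.nullMeasurableSet,
      hA0]
  exact measure_mono_null (fun z hz => hNsub hz) this

lemma radial_pos {S : Set ℝ} (hSm : MeasurableSet S) (hsub : S ⊆ Ioo 0 1)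
    (hpos : 0 < volume S) : 0 < volume {z : ℂ | ‖z‖ ∈ S} := by
  set s : Set (ℝ × ℝ) := S ×ˢ Ioo (-π) π with hs
  have hsm : MeasurableSet s := hSm.prod measurableSet_Ioo
  have hsvol : volume s = volume S * ENNReal.ofReal (2 * π) := by
    rw [hs, MeasureTheory.Measure.volume_eq_prod ℝ ℝ, Measure.prod_prod, Real.volume_Ioo]
    ring_nf
  have hsvolpos : 0 < volume s := by
    rw [hsvol]
    refine ENNReal.mul_pos hpos.ne' ?_
    simp only [ne_eq, ENNReal.ofReal_eq_zero, not_le]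
    positivity
  have hstarget : s ⊆ polarCoord.target := by
    rw [hs]
    intro p hp
    exact ⟨(hsub hp.1).1, hp.2⟩
  set I := ∫⁻ p in s, ENNReal.ofReal |(pcB p).det| ∂volume with hI
  have hfun : (fun p : ℝ × ℝ => ENNReal.ofReal |(pcB p).det|) = fun p => ENNReal.ofReal |p.1| := by
    funext p; rw [pcB_det]
  have hImeas : Measurable fun p : ℝ × ℝ => ENNReal.ofReal |(pcB p).det| := by
    rw [hfun]
    exact measurable_fst.abs.ennreal_ofReal
  have hIpos : 0 < I := by
    rcases (zero_le : 0 ≤ I).lt_or_eq with h | h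
    · exact h
    exfalso
    have hae := (lintegral_eq_zero_iff hImeas).mp h.symm
    have hFalse : ∀ᵐ p ∂volume.restrict s, False := by
      filter_upwards [hae, ae_restrict_mem hsm] with p h1 h2
      have hp1 : 0 < p.1 := (hsub h2.1).1
      simp only [Pi.zero_apply, pcB_det, ENNReal.ofReal_eq_zero,
        _root_.abs_of_pos hp1] at h1
      linarith
    have : volume.restrict s = 0 := by
      rw [← Measure.measure_univ_eq_zero]
      rw [ae_iff] at hFalse
      simpa using hFalse
    rw [Measure.restrict_eq_zero] at this
    exact hsvolpos.ne' this
  have key : I ≤ volume (polarCoord.symm '' s) := by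
    refine lintegral_abs_det_fderiv_le_addHaar_image volume hsm
      (fun x _ => (hasFDerivAt_polarCoord_symm x).hasFDerivWithinAt) ?_
    refine (polarCoord.symm.injOn).mono ?_
    rw [OpenPartialHomeomorph.symm_source]
    exact hstarget
  set A : Set (ℝ × ℝ) := {q : ℝ × ℝ | Real.sqrt (q.1^2 + q.2^2) ∈ S} with hACC
  have himg : polarCoord.symm '' s ⊆ A := by
    rintro q ⟨p, hp, rfl⟩
    have hp1 : 0 < p.1 := (hsub hp.1).1
    have hps : polarCoord.symm p = (p.1 * Real.cos p.2, p.1 * Real.sin p.2) :=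
      polarCoord_symm_apply p
    rw [hACC, mem_setOf_eq, hps]
    have hsq : (p.1 * Real.cos p.2)^2 + (p.1 * Real.sin p.2)^2 = p.1^2 := by
      nlinarith [Real.sin_sq_add_cos_sq p.2]
    show Real.sqrt ((p.1 * Real.cos p.2)^2 + (p.1 * Real.sin p.2)^2) ∈ S
    rw [hsq, Real.sqrt_sq hp1.le]
    exact hp.1
  have hnrm : Continuous fun q : ℝ × ℝ => Real.sqrt (q.1^2 + q.2^2) := by continuity
  have hAm : MeasurableSet A := hnrm.measurable hSm
  have hApos : 0 < volume A := lt_of_lt_of_le hIpos (key.trans (measure_mono himg))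
  have hpre : {z : ℂ | ‖z‖ ∈ S} = Complex.measurableEquivRealProd ⁻¹' A := by
    ext z
    simp only [hACC, mem_setOf_eq, mem_preimage, Complex.measurableEquivRealProd_apply]
    rw [abs_eq_nrm]
  rw [hpre, Complex.volume_preserving_equiv_real_prod.measure_preimage hAm.nullMeasurableSet]
  exact hApos
end radial

theorem stmt_16 (p : ℝ) (hp : 1 < p)
    (ω ν η : ℝ → ℝ)
    (hωint : IntegrableOn ω (Set.Ico (0:ℝ) 1))
    (hνint : IntegrableOn ν (Set.Ico (0:ℝ) 1))
    (hηint : IntegrableOn η (Set.Ico (0:ℝ) 1))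
    (hωnn : ∀ r ∈ Set.Ico (0:ℝ) 1, 0 ≤ ω r)
    (hνnn : ∀ r ∈ Set.Ico (0:ℝ) 1, 0 ≤ ν r)
    (hηnn : ∀ r ∈ Set.Ico (0:ℝ) 1, 0 ≤ η r)
    (hωpos : ∀ r ∈ Set.Ico (0:ℝ) 1, 0 < what ω r)
    (hηpos : ∀ r ∈ Set.Ico (0:ℝ) 1, 0 < what η r)
    (C₁ : ℝ) (hC₁ : 1 < C₁)
    (hωDD : ∀ r ∈ Set.Ico (0:ℝ) 1, what ω r ≤ C₁ * what ω ((1 + r) / 2))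
    -- boundedness of the maximal Bergman projection `P⁺_ω : L^p_ν → L^p_η`
    (Cb : ℝ) (hCb : 0 < Cb)
    (hbdd : ∀ f : ℂ → ℝ≥0∞, Measurable f →
      (∫⁻ z in Metric.ball (0:ℂ) 1,
          (∫⁻ ζ in Metric.ball (0:ℂ) 1,
              f ζ * (‖Bker ω z ζ‖₊ : ℝ≥0∞) * ENNReal.ofReal (ω ‖ζ‖) ∂dA) ^ p *
            ENNReal.ofReal (η ‖z‖) ∂dA)
        ≤ ENNReal.ofReal Cb *
            ∫⁻ z in Metric.ball (0:ℂ) 1, f z ^ p * ENNReal.ofReal (ν ‖z‖) ∂dA)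
    (E : Set ℂ) (hE : E ⊆ Metric.ball (0:ℂ) 1) (hEm : MeasurableSet E)
    (hEpos : 0 < volume E)
    (hνzero : ∀ z ∈ E, ν ‖z‖ = 0) :
    ∀ᵐ z ∂(volume.restrict E), ω ‖z‖ = 0 := by
  classical
  have hp0 : (0:ℝ) < p := lt_trans one_pos hp
  have hball : MeasurableSet (Metric.ball (0:ℂ) 1) := measurableSet_ball
  have hπ : (ENNReal.ofReal Real.pi)⁻¹ ≠ 0 := by simp
  -- transfer of a.e. statements between dA and volume
  have haeiff : ∀ (s : Set ℂ) (P : ℂ → Prop),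
      (∀ᵐ z ∂dA.restrict s, P z) ↔ (∀ᵐ z ∂volume.restrict s, P z) := by
    intro s P
    rw [ae_iff, ae_iff, show dA.restrict s = (ENNReal.ofReal Real.pi)⁻¹ • volume.restrict s from
      Measure.restrict_smul _ _ _, Measure.smul_apply, smul_eq_mul]
    constructor
    · intro h
      rcases mul_eq_zero.mp h with h | h
      · exact absurd h hπ
      · exact h
    · intro h; rw [h, mul_zero]
  haveI hfin : IsFiniteMeasure (dA.restrict (Metric.ball (0:ℂ) 1)) := by
    constructor
    rw [Measure.restrict_apply_univ, dA, Measure.smul_apply, smul_eq_mul]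
    exact ENNReal.mul_lt_top (by simp [Real.pi_pos]) measure_ball_lt_top
  -- measurable representatives of ω and η
  obtain ⟨ω', hω'meas, hω'eq⟩ : ∃ g : ℝ → ℝ, Measurable g ∧
      ω =ᵐ[volume.restrict (Set.Ico (0:ℝ) 1)] g :=
    ⟨hωint.aemeasurable.mk ω, hωint.aemeasurable.measurable_mk, hωint.aemeasurable.ae_eq_mk⟩
  obtain ⟨η', hη'meas, hη'eq⟩ : ∃ g : ℝ → ℝ, Measurable g ∧
      η =ᵐ[volume.restrict (Set.Ico (0:ℝ) 1)] g :=
    ⟨hηint.aemeasurable.mk η, hηint.aemeasurable.measurable_mk, hηint.aemeasurable.ae_eq_mk⟩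
  -- radial a.e. identification of ω with ω'
  have hωrad : ∀ᵐ ζ ∂(volume : Measure ℂ),
      ¬ (‖ζ‖ ∈ Set.Ico (0:ℝ) 1 ∧ ω (‖ζ‖) ≠ ω' (‖ζ‖)) := by
    have h0 : volume.restrict (Set.Ico (0:ℝ) 1) {r | ω r ≠ ω' r} = 0 := hω'eq
    rw [Measure.restrict_apply' measurableSet_Ico] at h0
    have := radial_null (N := {r | ω r ≠ ω' r} ∩ Set.Ico (0:ℝ) 1) h0
    rw [ae_iff]
    convert this using 2
    ext ζ
    simp only [mem_setOf_eq, not_not, mem_inter_iff]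
    tauto
  -- the kernel power series facts
  have hwhalf : 0 < what ω (1/2) := hωpos _ (by norm_num)
  have hrad : 1 ≤ (bps ω).radius := one_le_radius ω hωint hωnn hωpos
  have hbc0 : bc ω 0 ≠ 0 := bc_zero_ne ω (mom_pos ω hωint hωnn hwhalf one_pos)
  set U : Set (ℂ × ℂ) := Metric.ball (0:ℂ) 1 ×ˢ Metric.ball (0:ℂ) 1 with hU
  have hUm : MeasurableSet U := hball.prod hball
  set K : ℂ × ℂ → ℂ := U.piecewise (fun q => (bps ω).sum (q.2 * (starRingEnd ℂ) q.1)) 0 with hK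
  have hKmeas : Measurable K :=
    ContinuousOn.measurable_piecewise (bps_continuousOn_ball ω hrad) continuousOn_const hUm
  have hKeq : ∀ z ζ : ℂ, z ∈ Metric.ball (0:ℂ) 1 → ζ ∈ Metric.ball (0:ℂ) 1 →
      K (z, ζ) = Bker ω z ζ := by
    intro z ζ hz hζ
    rw [hK, Set.piecewise_eq_of_mem _ _ _ (show (z, ζ) ∈ U from ⟨hz, hζ⟩), Bker_eq_sum]
  set f : ℂ → ℝ≥0∞ := E.indicator (fun _ => (⊤ : ℝ≥0∞)) with hf
  have hfmeas : Measurable f := measurable_const.indicator hEm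
  set F : ℂ × ℂ → ℝ≥0∞ := fun q =>
    f q.2 * (‖K q‖₊ : ℝ≥0∞) * ENNReal.ofReal (ω' ‖q.2‖) with hF
  have hFmeas : Measurable F := by
    refine Measurable.mul (Measurable.mul ?_ ?_) ?_
    · exact hfmeas.comp measurable_snd
    · exact hKmeas.nnnorm.coe_nnreal_ennreal
    · exact ((hω'meas.comp measurable_norm).comp measurable_snd).ennreal_ofReal
  set μB := dA.restrict (Metric.ball (0:ℂ) 1) with hμB
  set InnerM : ℂ → ℝ≥0∞ := fun z => ∫⁻ ζ, F (z, ζ) ∂μB with hInnerM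
  have hInnerMmeas : Measurable InnerM := hFmeas.lintegral_prod_right'
  -- the right-hand side vanishes
  have hRHS : (∫⁻ z in Metric.ball (0:ℂ) 1, f z ^ p * ENNReal.ofReal (ν ‖z‖) ∂dA) = 0 := by
    have h0 : ∀ z, f z ^ p * ENNReal.ofReal (ν ‖z‖) = 0 := by
      intro z
      by_cases hz : z ∈ E
      · rw [hf, indicator_of_mem hz, hνzero z hz, ENNReal.ofReal_zero, mul_zero]
      · rw [hf, indicator_of_notMem hz, ENNReal.zero_rpow_of_pos hp0, zero_mul]
    calc (∫⁻ z in Metric.ball (0:ℂ) 1, f z ^ p * ENNReal.ofReal (ν ‖z‖) ∂dA)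
        = ∫⁻ _ in Metric.ball (0:ℂ) 1, 0 ∂dA := by
          exact lintegral_congr fun z => h0 z
      _ = 0 := lintegral_zero
  have hmain := hbdd f hfmeas
  rw [hRHS, mul_zero] at hmain
  have hLHS : (∫⁻ z in Metric.ball (0:ℂ) 1,
      (∫⁻ ζ in Metric.ball (0:ℂ) 1,
        f ζ * (‖Bker ω z ζ‖₊ : ℝ≥0∞) * ENNReal.ofReal (ω ‖ζ‖) ∂dA) ^ p *
      ENNReal.ofReal (η ‖z‖) ∂dA) = 0 := le_antisymm hmain zero_le
  -- inner integrals agree with the measurable version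
  have hinner_eq : ∀ z ∈ Metric.ball (0:ℂ) 1,
      (∫⁻ ζ in Metric.ball (0:ℂ) 1,
        f ζ * (‖Bker ω z ζ‖₊ : ℝ≥0∞) * ENNReal.ofReal (ω ‖ζ‖) ∂dA) = InnerM z := by
    intro z hz
    refine lintegral_congr_ae ?_
    have hmem : ∀ᵐ ζ ∂μB, ζ ∈ Metric.ball (0:ℂ) 1 := ae_restrict_mem hball
    have hωae : ∀ᵐ ζ ∂μB,
        ¬ (‖ζ‖ ∈ Set.Ico (0:ℝ) 1 ∧ ω (‖ζ‖) ≠ ω' (‖ζ‖)) :=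
      (haeiff _ _).mpr (ae_restrict_of_ae hωrad)
    filter_upwards [hmem, hωae] with ζ h1 h2
    have hico : ‖ζ‖ ∈ Set.Ico (0:ℝ) 1 := by
      exact ⟨norm_nonneg ζ, mem_ball_zero_iff.mp h1⟩
    have hωeq : ω ‖ζ‖ = ω' ‖ζ‖ := by
      by_contra hc
      exact h2 ⟨hico, hc⟩
    rw [hωeq, hF]
    simp only
    rw [hKeq z ζ hz h1]
  -- outer integrand vanishes a.e.
  have houter0 : (∫⁻ z, InnerM z ^ p * ENNReal.ofReal (η' ‖z‖) ∂μB) = 0 := by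
    rw [← hLHS]
    refine lintegral_congr_ae ?_
    have hmem : ∀ᵐ z ∂μB, z ∈ Metric.ball (0:ℂ) 1 := ae_restrict_mem hball
    have hηrad : ∀ᵐ z ∂(volume : Measure ℂ),
        ¬ (‖z‖ ∈ Set.Ico (0:ℝ) 1 ∧ η (‖z‖) ≠ η' (‖z‖)) := by
      have h0 : volume.restrict (Set.Ico (0:ℝ) 1) {r | η r ≠ η' r} = 0 := hη'eq
      rw [Measure.restrict_apply' measurableSet_Ico] at h0
      have := radial_null (N := {r | η r ≠ η' r} ∩ Set.Ico (0:ℝ) 1) h0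
      rw [ae_iff]
      convert this using 2
      ext z
      simp only [mem_setOf_eq, not_not, mem_inter_iff]
      tauto
    have hηae : ∀ᵐ z ∂μB,
        ¬ (‖z‖ ∈ Set.Ico (0:ℝ) 1 ∧ η (‖z‖) ≠ η' (‖z‖)) :=
      (haeiff _ _).mpr (ae_restrict_of_ae hηrad)
    filter_upwards [hmem, hηae] with z h1 h2
    have hico : ‖z‖ ∈ Set.Ico (0:ℝ) 1 := by
      exact ⟨norm_nonneg z, mem_ball_zero_iff.mp h1⟩
    have hηeq : η ‖z‖ = η' ‖z‖ := by
      by_contra hc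
      exact h2 ⟨hico, hc⟩
    rw [hinner_eq z h1, hηeq]
  have houter : ∀ᵐ z ∂volume.restrict (Metric.ball (0:ℂ) 1),
      InnerM z ^ p * ENNReal.ofReal (η' ‖z‖) = 0 := by
    refine (haeiff _ _).mp ?_
    exact (lintegral_eq_zero_iff ((hInnerMmeas.pow_const p).mul
      ((hη'meas.comp measurable_norm).ennreal_ofReal))).mp houter0
  -- find a good point z₀
  set S : Set ℝ := {r | r ∈ Ioo (0:ℝ) 1 ∧ 0 < η' r} with hS
  have hSm : MeasurableSet S := by
    refine MeasurableSet.inter measurableSet_Ioo ?_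
    exact measurableSet_lt measurable_const hη'meas
  have hSsub : S ⊆ Ioo (0:ℝ) 1 := fun r hr => hr.1
  have hSpos : 0 < volume S := by
    by_contra hc
    push_neg at hc
    have hS0 : volume S = 0 := le_antisymm (le_of_not_gt (fun h => hc.not_gt h)) zero_le
    have hη'int : ∫ r in Ioo (0:ℝ) 1, η' r = what η 0 := by
      rw [what_eq_Ioo η one_pos.le]
      refine (integral_congr_ae ?_).symm
      exact ae_restrict_of_ae_restrict_of_subset Ioo_subset_Ico_self hη'eq
    have hle : ∀ᵐ r ∂volume.restrict (Ioo (0:ℝ) 1), η' r ≤ 0 := by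
      have hSae : ∀ᵐ r ∂volume.restrict (Ioo (0:ℝ) 1), r ∉ S :=
        ae_restrict_of_ae (by rw [ae_iff]; simpa [not_not] using hS0)
      filter_upwards [hSae, ae_restrict_mem measurableSet_Ioo] with r h1 h2
      by_contra h3
      push_neg at h3
      exact h1 ⟨h2, h3⟩
    have hnp := integral_nonpos_of_ae hle
    have hwpos := hηpos 0 (by norm_num)
    rw [← hη'int] at hwpos
    linarith
  set T : Set ℂ := {z : ℂ | ‖z‖ ∈ S} with hT
  have hTpos : 0 < volume T := radial_pos hSm hSsub hSpos
  have hTball : T ⊆ Metric.ball (0:ℂ) 1 := by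
    intro z hz
    rw [Metric.mem_ball, dist_zero_right]
    exact (hSsub hz).2
  obtain ⟨z₀, hz₀T, hz₀P⟩ : ∃ z₀ ∈ T, InnerM z₀ ^ p * ENNReal.ofReal (η' ‖z₀‖) = 0 := by
    by_contra hc
    push_neg at hc
    have hb : volume.restrict (Metric.ball (0:ℂ) 1)
        {z | ¬ (InnerM z ^ p * ENNReal.ofReal (η' ‖z‖) = 0)} = 0 := houter
    have hTsub : T ⊆ {z | ¬ (InnerM z ^ p * ENNReal.ofReal (η' ‖z‖) = 0)} :=
      fun z hz => hc z hz
    have : volume T = 0 := by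
      have h1 : volume.restrict (Metric.ball (0:ℂ) 1) T = volume T := by
        rw [Measure.restrict_apply' hball, inter_eq_self_of_subset_left hTball]
      rw [← h1]
      exact le_antisymm (le_trans (measure_mono hTsub) (le_of_eq hb)) zero_le
    exact hTpos.ne' this
  have hz₀ball : z₀ ∈ Metric.ball (0:ℂ) 1 := hTball hz₀T
  have hz₀norm : ‖z₀‖ < 1 := mem_ball_zero_iff.mp hz₀ball
  have hη'z₀ : 0 < η' ‖z₀‖ := by
    exact hz₀T.2
  have hInnerM0 : InnerM z₀ = 0 := by
    have h1 : InnerM z₀ ^ p = 0 := by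
      rcases mul_eq_zero.mp hz₀P with h | h
      · exact h
      · rw [ENNReal.ofReal_eq_zero] at h
        linarith
    rcases ENNReal.rpow_eq_zero_iff.mp h1 with ⟨h, _⟩ | ⟨_, h⟩
    · exact h
    · linarith
  -- the inner integrand vanishes a.e.
  have hFz : ∀ᵐ ζ ∂μB, F (z₀, ζ) = 0 :=
    (lintegral_eq_zero_iff (hFmeas.comp measurable_prodMk_left)).mp hInnerM0
  -- zero set of the kernel
  have hZ : {ζ : ℂ | ζ ∈ Metric.ball (0:ℂ) 1 ∧ (bps ω).sum (ζ * (starRingEnd ℂ) z₀) = 0}.Countable :=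
    countable_zeros ω hrad hbc0 hz₀norm
  have hZ0 : volume {ζ : ℂ | ζ ∈ Metric.ball (0:ℂ) 1 ∧
      (bps ω).sum (ζ * (starRingEnd ℂ) z₀) = 0} = 0 := hZ.measure_zero _
  -- conclude
  have h1 : ∀ᵐ ζ ∂volume.restrict E, F (z₀, ζ) = 0 :=
    ae_restrict_of_ae_restrict_of_subset hE ((haeiff _ _).mp hFz)
  have h2 : ∀ᵐ ζ ∂volume.restrict E, ζ ∈ E := ae_restrict_mem hEm
  have h3 : ∀ᵐ ζ ∂volume.restrict E, ζ ∉ {ζ : ℂ | ζ ∈ Metric.ball (0:ℂ) 1 ∧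
      (bps ω).sum (ζ * (starRingEnd ℂ) z₀) = 0} :=
    ae_restrict_of_ae (by rw [ae_iff]; simpa [not_not] using hZ0)
  have h4 : ∀ᵐ ζ ∂volume.restrict E,
      ¬ (‖ζ‖ ∈ Set.Ico (0:ℝ) 1 ∧ ω (‖ζ‖) ≠ ω' (‖ζ‖)) :=
    ae_restrict_of_ae hωrad
  filter_upwards [h1, h2, h3, h4] with ζ hF0 hζE hζZ hζD
  have hζb : ζ ∈ Metric.ball (0:ℂ) 1 := hE hζE
  have hico : ‖ζ‖ ∈ Set.Ico (0:ℝ) 1 := by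
    exact ⟨norm_nonneg ζ, mem_ball_zero_iff.mp hζb⟩
  have hωeq : ω ‖ζ‖ = ω' ‖ζ‖ := by
    by_contra hc
    exact hζD ⟨hico, hc⟩
  have hKne : K (z₀, ζ) ≠ 0 := by
    rw [hKeq z₀ ζ hz₀ball hζb, Bker_eq_sum]
    exact fun h => hζZ ⟨hζb, h⟩
  rw [hF] at hF0
  simp only at hF0
  rw [hf, indicator_of_mem hζE] at hF0
  have hω'0 : ENNReal.ofReal (ω' ‖ζ‖) = 0 := by
    rcases mul_eq_zero.mp hF0 with h | h
    · rcases mul_eq_zero.mp h with h' | h'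
      · exact absurd h' (by simp)
      · exact absurd h' (by simpa using hKne)
    · exact h
  rw [ENNReal.ofReal_eq_zero] at hω'0
  have hωnn' : 0 ≤ ω ‖ζ‖ := hωnn ‖ζ‖ (by assumption)
  rw [hωeq] at hωnn' ⊢
  linarith
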